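/- The Lie subalgebras a_k(n) of su(2ⁿ) generated by translation-invariant 2-local Pauli interactions (with both factors ≠ I) have trivial center for 1 ≤ k ≤ 22 and n ≥ 3: no nonzero element commutes with the whole subalgebra. -/

import Mathlib

open Matrix

attribute [local instance 100] LieRing.ofAssociativeRing

noncomputable def pauli : Fin 4 → Matrix (Fin 2) (Fin 2) ℂ :=
  ![1, !![0, 1; 1, 0], !![0, -Complex.I; Complex.I, 0], !![1, 0; 0, -1]]

noncomputable def pauliString {n : ℕ} (s : Fin n → Fin 4) :
    Matrix (Fin n → Fin 2) (Fin n → Fin 2) ℂ :=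
  Matrix.of fun v w => ∏ j, pauli (s j) (v j) (w j)

def PauliStrings (n : ℕ) : Set (Matrix (Fin n → Fin 2) (Fin n → Fin 2) ℂ) :=
  Set.range (pauliString (n := n))

/-- The 2-local Pauli string `A ⊗ B` acting on sites `j, j+1` of an `n`-qubit chain
(with Pauli labels `0 = I`, `1 = X`, `2 = Y`, `3 = Z`). -/
noncomputable def twoLocal (n j : ℕ) (pq : Fin 4 × Fin 4) :
    Matrix (Fin n → Fin 2) (Fin n → Fin 2) ℂ :=
  pauliString (fun t => if (t : ℕ) = j then pq.1 else if (t : ℕ) = j + 1 then pq.2 else 0)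

/-- Generating sets of the subalgebras `a_k ⊆ su(4)`, `1 ≤ k ≤ 22` (labels `1=X,2=Y,3=Z`). -/
def spinGens : ℕ → List (Fin 4 × Fin 4)
  | 1 => [(1,2)]
  | 2 => [(1,2),(2,1)]
  | 3 => [(1,1),(2,3)]
  | 4 => [(1,1),(2,2)]
  | 5 => [(1,2),(2,3)]
  | 6 => [(1,1),(2,3),(3,2)]
  | 7 => [(1,1),(2,2),(3,3)]
  | 8 => [(1,1),(1,3)]
  | 9 => [(1,2),(1,3)]
  | 10 => [(1,2),(2,3),(3,1)]
  | 11 => [(1,2),(2,1),(2,3)]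
  | 12 => [(1,1),(1,2),(2,3)]
  | 13 => [(2,2),(2,3),(1,1)]
  | 14 => [(1,1),(2,2),(1,2)]
  | 15 => [(1,1),(1,2),(1,3)]
  | 16 => [(1,2),(2,1),(2,3),(3,2)]
  | 17 => [(1,1),(1,2),(3,1)]
  | 18 => [(1,1),(1,3),(2,2),(3,2)]
  | 19 => [(1,1),(1,2),(3,1),(2,3)]
  | 20 => [(1,1),(2,2),(3,3),(3,2)]
  | 21 => [(1,1),(2,2),(1,2),(3,1)]
  | 22 => [(1,1),(1,2),(1,3),(2,1)]
  | _ => []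

/-- The dynamical Lie algebra `a_k(n) ⊆ su(2ⁿ)` generated by the translation-invariant
2-local interactions of type `k` on an open chain of length `n`. -/
noncomputable def dla (k n : ℕ) :
    LieSubalgebra ℝ (Matrix (Fin n → Fin 2) (Fin n → Fin 2) ℂ) :=
  LieSubalgebra.lieSpan ℝ (Matrix (Fin n → Fin 2) (Fin n → Fin 2) ℂ)
    {x | ∃ pq ∈ spinGens k, ∃ j, j + 1 < n ∧ x = Complex.I • twoLocal n j pq}

noncomputable def pEps : Fin 4 → Fin 4 → ℂ :=
  ![![1,1,1,1], ![1,1,Complex.I,-Complex.I], ![1,-Complex.I,1,Complex.I], ![1,Complex.I,-Complex.I,1]]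

def pMul : Fin 4 → Fin 4 → Fin 4 :=
  ![![0,1,2,3], ![1,0,3,2], ![2,3,0,1], ![3,2,1,0]]

lemma pauli_mul (p q : Fin 4) : pauli p * pauli q = pEps p q • pauli (pMul p q) := by
  fin_cases p <;> fin_cases q <;>
    ext i j <;> fin_cases i <;> fin_cases j <;>
      simp [pauli, pEps, pMul, Matrix.mul_apply, Fin.sum_univ_two, Matrix.one_apply,
        vecHead, vecTail]

lemma pEps_left_zero (q : Fin 4) : pEps 0 q = 1 := by fin_cases q <;> simp [pEps]
lemma pEps_right_zero (p : Fin 4) : pEps p 0 = 1 := by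
  fin_cases p <;> simp [pEps, vecHead, vecTail]
lemma pEps_diag (p : Fin 4) : pEps p p = 1 := by fin_cases p <;> simp [pEps, vecHead, vecTail]
lemma pEps_anti {p q : Fin 4} (hp : p ≠ 0) (hq : q ≠ 0) (hne : p ≠ q) :
    pEps p q = -pEps q p := by
  fin_cases p <;> fin_cases q <;> simp_all [pEps, vecHead, vecTail]
lemma pMul_symm (p q : Fin 4) : pMul p q = pMul q p := by fin_cases p <;> fin_cases q <;> rfl
lemma pMul_diag (p : Fin 4) : pMul p p = 0 := by fin_cases p <;> rfl

lemma pauliString_mul_apply {n : ℕ} (s t : Fin n → Fin 4) (v w : Fin n → Fin 2) :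
    (pauliString s * pauliString t) v w = ∏ j, (pauli (s j) * pauli (t j)) (v j) (w j) := by
  simp only [Matrix.mul_apply, pauliString, Matrix.of_apply]
  rw [Fintype.prod_sum]
  exact Finset.sum_congr rfl fun u _ => (Finset.prod_mul_distrib).symm

lemma pauliString_mul_eq {n : ℕ} (s t u : Fin n → Fin 4) (e : Fin n → ℂ)
    (h : ∀ j, pauli (s j) * pauli (t j) = e j • pauli (u j)) :
    pauliString s * pauliString t = (∏ j, e j) • pauliString u := by
  ext v w
  rw [pauliString_mul_apply]
  simp only [h, Matrix.smul_apply, smul_eq_mul, Matrix.smul_apply]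
  rw [Finset.prod_mul_distrib]
  simp [pauliString, smul_eq_mul]

lemma pauliString_zero {n : ℕ} : pauliString (fun _ => (0 : Fin 4)) = (1 : Matrix (Fin n → Fin 2) (Fin n → Fin 2) ℂ) := by
  ext v w
  simp only [pauliString, Matrix.of_apply]
  have : ∀ j : Fin n, pauli 0 (v j) (w j) = if v j = w j then 1 else 0 := by
    intro j; simp [pauli, Matrix.one_apply]
  simp only [this, Finset.prod_boole, Matrix.one_apply]
  simp [funext_iff]

lemma pauliString_sq {n : ℕ} (s : Fin n → Fin 4) : pauliString s * pauliString s = 1 := by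
  have := pauliString_mul_eq s s (fun _ => 0) (fun _ => 1)
    (fun j => by rw [pauli_mul, pEps_diag, pMul_diag, one_smul])
  simpa [pauliString_zero] using this

lemma pauliString_anticomm {n : ℕ} (s t : Fin n → Fin 4) (i0 : Fin n)
    (h1 : ∀ j, j ≠ i0 → pEps (s j) (t j) = 1 ∧ pEps (t j) (s j) = 1)
    (h2 : pEps (s i0) (t i0) = -pEps (t i0) (s i0)) :
    pauliString s * pauliString t = -(pauliString t * pauliString s) := by
  have hst := pauliString_mul_eq s t (fun j => pMul (s j) (t j)) (fun j => pEps (s j) (t j))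
    (fun j => pauli_mul _ _)
  have hts := pauliString_mul_eq t s (fun j => pMul (s j) (t j)) (fun j => pEps (t j) (s j))
    (fun j => by rw [pauli_mul, pMul_symm])
  rw [hst, hts]
  rw [Finset.prod_eq_single i0 (fun j _ hj => (h1 j hj).1) (by simp),
      Finset.prod_eq_single i0 (fun j _ hj => (h1 j hj).2) (by simp), h2, neg_smul]

lemma pauli_herm (p : Fin 4) : (pauli p)ᴴ = pauli p := by
  fin_cases p <;> ext i j <;> fin_cases i <;> fin_cases j <;>
    simp [pauli, Matrix.conjTranspose_apply, Matrix.one_apply]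

lemma pauliString_herm {n : ℕ} (s : Fin n → Fin 4) : (pauliString s)ᴴ = pauliString s := by
  ext v w
  simp only [Matrix.conjTranspose_apply, pauliString, Matrix.of_apply]
  rw [show (star (∏ j, pauli (s j) (w j) (v j)) : ℂ) =
      (starRingEnd ℂ) (∏ j, pauli (s j) (w j) (v j)) from rfl, map_prod]
  refine Finset.prod_congr rfl fun j _ => ?_
  have := pauli_herm (s j)
  calc (starRingEnd ℂ) (pauli (s j) (w j) (v j)) = (pauli (s j))ᴴ (v j) (w j) := rfl
    _ = pauli (s j) (v j) (w j) := by rw [this]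

section Abstract
variable {m : Type*} [Fintype m] [DecidableEq m]

/-- key trace identity: if `c` commutes with `a`, `a*a = -1`, `a` anticommutes with `x`,
then `trace (c * x) = 0`. -/
lemma key_trace (c x a : Matrix m m ℂ) (h1 : c * a = a * c) (h2 : a * a = -1)
    (h3 : a * x = -(x * a)) : (c * x).trace = 0 := by
  have e1 : a * (a * x) = -x := by rw [← mul_assoc, h2]; simp
  have e2 : (a * x) * a = x := by
    rw [h3, neg_mul, mul_assoc, h2]; simp
  have hx : c * x = (-(1/2 : ℂ)) • (c * (a * (a*x)) - c * ((a*x) * a)) := by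
    rw [e1, e2, mul_neg]
    rw [show -(c*x) - c*x = (-2 : ℂ) • (c * x) by push_cast; module]
    rw [smul_smul]; norm_num
  rw [hx, Matrix.trace_smul, Matrix.trace_sub]
  have : (c * ((a * x) * a)).trace = (c * (a * (a * x))).trace := by
    rw [← mul_assoc, Matrix.trace_mul_comm, ← mul_assoc, ← h1, mul_assoc]
  rw [this]; simp

/-- trace functional `y ↦ trace (c * y)` as an ℝ-linear map. -/
noncomputable def traceFun (c : Matrix m m ℂ) : Matrix m m ℂ →ₗ[ℝ] ℂ where
  toFun y := (c * y).trace
  map_add' x y := by simp [mul_add]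
  map_smul' r y := by simp [Matrix.mul_smul]

lemma central_self_trace (S : Set (Matrix m m ℂ)) (c : Matrix m m ℂ)
    (hc : c ∈ LieSubalgebra.lieSpan ℝ (Matrix m m ℂ) S)
    (hcen : ∀ x ∈ LieSubalgebra.lieSpan ℝ (Matrix m m ℂ) S, c * x = x * c)
    (hS : ∀ x ∈ S, (c * x).trace = 0) : (c * c).trace = 0 := by
  set L := LieSubalgebra.lieSpan ℝ (Matrix m m ℂ) S with hL
  let K : LieSubalgebra ℝ (Matrix m m ℂ) :=
    { toSubmodule := L.toSubmodule ⊓ LinearMap.ker (traceFun c)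
      lie_mem' := by
        rintro x y ⟨hx1, hx2⟩ ⟨hy1, hy2⟩
        refine ⟨L.lie_mem hx1 hy1, ?_⟩
        have hcx : c * x = x * c := hcen x hx1
        show (c * ⁅x, y⁆).trace = 0
        rw [Ring.lie_def, mul_sub, Matrix.trace_sub]
        rw [show c * (y * x) = (c * y) * x by noncomm_ring,
            Matrix.trace_mul_comm (c * y) x,
            show x * (c * y) = (x * c) * y by noncomm_ring, ← hcx, ← mul_assoc]
        simp }
  have hle : L ≤ K := by
    rw [hL, LieSubalgebra.lieSpan_le]
    intro x hx
    exact ⟨LieSubalgebra.subset_lieSpan hx, hS x hx⟩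
  exact (hle hc).2

/-- skew-adjoint matrices form a Lie subalgebra. -/
noncomputable def skewLie : LieSubalgebra ℝ (Matrix m m ℂ) where
  carrier := {x | xᴴ = -x}
  add_mem' := by
    intro x y hx hy
    show (x + y)ᴴ = -(x + y)
    rw [Matrix.conjTranspose_add, hx, hy]; abel
  zero_mem' := by show (0 : Matrix m m ℂ)ᴴ = -0; simp
  smul_mem' := by
    intro r x hx
    show (r • x)ᴴ = -(r • x)
    rw [Matrix.conjTranspose_smul, hx, star_trivial, smul_neg]
  lie_mem' := by
    intro x y hx hy
    show ⁅x, y⁆ᴴ = -⁅x, y⁆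
    rw [Ring.lie_def, Matrix.conjTranspose_sub, Matrix.conjTranspose_mul,
        Matrix.conjTranspose_mul, hx, hy]
    simp [Ring.lie_def]

lemma eq_zero_of_skew_trace (c : Matrix m m ℂ) (h1 : cᴴ = -c) (h2 : (c * c).trace = 0) :
    c = 0 := by
  have h3 : (c * cᴴ).trace = 0 := by rw [h1, mul_neg, Matrix.trace_neg, h2, neg_zero]
  have h4 : ∑ i : m, ∑ j : m, (Complex.normSq (c i j) : ℂ) = 0 := by
    rw [← h3]
    simp only [Matrix.trace, Matrix.diag, Matrix.mul_apply, Matrix.conjTranspose_apply]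
    refine Finset.sum_congr rfl fun i _ => Finset.sum_congr rfl fun j _ => ?_
    exact (Complex.mul_conj (c i j)).symm
  have h5 : ∑ i : m, ∑ j : m, Complex.normSq (c i j) = 0 := by
    have := h4
    push_cast at this ⊢
    exact_mod_cast this
  ext i j
  have hnn : ∀ i ∈ Finset.univ (α := m), (0:ℝ) ≤ ∑ j : m, Complex.normSq (c i j) :=
    fun i _ => Finset.sum_nonneg fun j _ => Complex.normSq_nonneg _
  have h6 := (Finset.sum_eq_zero_iff_of_nonneg hnn).mp h5 i (Finset.mem_univ i)
  have h7 := (Finset.sum_eq_zero_iff_of_nonneg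
    (fun j _ => Complex.normSq_nonneg (c i j))).mp h6 j (Finset.mem_univ j)
  simpa using Complex.normSq_eq_zero.mp h7

end Abstract

lemma pEps_zero_or {a b : Fin 4} (h : a = 0 ∨ b = 0) : pEps a b = 1 ∧ pEps b a = 1 := by
  rcases h with rfl | rfl
  · exact ⟨pEps_left_zero b, pEps_right_zero b⟩
  · exact ⟨pEps_right_zero a, pEps_left_zero a⟩

lemma twoLocal_adj_anticomm {n : ℕ} (jl : ℕ) (hl : jl + 1 < n) (pL qL pU qU : Fin 4)
    (hq : qL ≠ 0) (hp : pU ≠ 0) (hne : qL ≠ pU) :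
    twoLocal n jl (pL, qL) * twoLocal n (jl+1) (pU, qU) =
      -(twoLocal n (jl+1) (pU, qU) * twoLocal n jl (pL, qL)) := by
  apply pauliString_anticomm _ _ ⟨jl+1, hl⟩
  · intro j hj
    have hjv : (j : ℕ) ≠ jl + 1 := fun h => hj (Fin.ext h)
    apply pEps_zero_or
    by_cases h0 : (j : ℕ) = jl
    · right; rw [if_neg (by omega), if_neg (by omega)]
    · left; rw [if_neg h0, if_neg hjv]
  · show pEps (if (jl+1 : ℕ) = jl then pL else if (jl+1:ℕ) = jl+1 then qL else 0)
        (if (jl+1:ℕ) = jl+1 then pU else _) = _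
    rw [if_neg (by omega), if_pos rfl, if_pos rfl]
    exact pEps_anti hq hp hne

lemma smul_anticomm {m : Type*} [Fintype m] [DecidableEq m] (A B : Matrix m m ℂ) (z w : ℂ)
    (h : A * B = -(B * A)) : (z • A) * (w • B) = -((w • B) * (z • A)) := by
  rw [Matrix.smul_mul, Matrix.mul_smul, h, Matrix.smul_mul, Matrix.mul_smul,
    smul_smul, smul_smul, mul_comm z w, smul_neg]

lemma smul_sq {m : Type*} [Fintype m] [DecidableEq m] (A : Matrix m m ℂ) (z : ℂ)
    (hz : z * z = -1) (hA : A * A = 1) : (z • A) * (z • A) = -1 := by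
  rw [Matrix.smul_mul, Matrix.mul_smul, smul_smul, hz, hA]
  simp

lemma twoLocal_sq {n : ℕ} (j : ℕ) (pq : Fin 4 × Fin 4) :
    twoLocal n j pq * twoLocal n j pq = 1 := pauliString_sq _

lemma twoLocal_herm {n : ℕ} (j : ℕ) (pq : Fin 4 × Fin 4) :
    (twoLocal n j pq)ᴴ = twoLocal n j pq := pauliString_herm _

/-- right partner exists except in the two exceptional cases -/
lemma exists_right_partner (k : ℕ) (hk1 : 1 ≤ k) (hk2 : k ≤ 22) (p q : Fin 4)
    (h : (p, q) ∈ spinGens k) :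
    ((k = 8 ∨ k = 15) ∧ p = 1 ∧ q = 1) ∨
      ∃ r ∈ spinGens k, r.1 ≠ q ∧ r.1 ≠ 0 ∧ q ≠ 0 := by
  revert h; revert p q
  interval_cases k <;> decide

lemma exists_left_partner (k : ℕ) (hk1 : 1 ≤ k) (hk2 : k ≤ 22) (p q : Fin 4)
    (h : (p, q) ∈ spinGens k) :
    ∃ r ∈ spinGens k, r.2 ≠ p ∧ r.2 ≠ 0 ∧ p ≠ 0 := by
  revert h; revert p q
  interval_cases k <;> decide

lemma mem_dla_gen {k n : ℕ} (p q : Fin 4) (h : (p,q) ∈ spinGens k) (j : ℕ) (hj : j + 1 < n) :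
    Complex.I • twoLocal n j (p,q) ∈ dla k n :=
  LieSubalgebra.subset_lieSpan ⟨(p,q), h, j, hj, rfl⟩

noncomputable def uStr (n : ℕ) : Fin n → Fin 4 :=
  fun t => if (t:ℕ) = 0 then 1 else if (t:ℕ) = 1 then 2 else if (t:ℕ) = 2 then 1 else 0

lemma special_AB {n : ℕ} (hn : 3 ≤ n) :
    twoLocal n 0 (1,3) * twoLocal n 1 (1,1) = Complex.I • pauliString (uStr n) := by
  have h := pauliString_mul_eq
    (fun t : Fin n => if (t:ℕ) = 0 then (1 : Fin 4) else if (t:ℕ) = 0+1 then 3 else 0)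
    (fun t : Fin n => if (t:ℕ) = 1 then (1 : Fin 4) else if (t:ℕ) = 1+1 then 1 else 0)
    (uStr n)
    (fun j : Fin n => pEps (if (j:ℕ) = 0 then (1:Fin 4) else if (j:ℕ) = 0+1 then 3 else 0)
                  (if (j:ℕ) = 1 then (1:Fin 4) else if (j:ℕ) = 1+1 then 1 else 0))
    (by
      intro j
      rw [pauli_mul]
      beta_reduce
      simp only [uStr]
      split_ifs <;>
        first
          | omega
          | exact congrArg (fun z => pEps _ _ • pauli z) (by decide))
  have hprod : (∏ j : Fin n, pEps (if (j:ℕ) = 0 then (1:Fin 4) else if (j:ℕ) = 0+1 then 3 else 0)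
      (if (j:ℕ) = 1 then (1:Fin 4) else if (j:ℕ) = 1+1 then 1 else 0)) = Complex.I := by
    rw [Finset.prod_eq_single (⟨1, by omega⟩ : Fin n)]
    · have hv : ((⟨1, by omega⟩ : Fin n) : ℕ) = 1 := rfl
      rw [hv]
      norm_num [pEps, vecHead, vecTail]
      rfl
    · intro j _ hj
      have hjv : (j:ℕ) ≠ 1 := fun hh => hj (Fin.ext hh)
      split_ifs <;> first | omega | norm_num [pEps, vecHead, vecTail]
    · simp
  rw [← hprod]
  exact h

lemma special_BA {n : ℕ} (hn : 3 ≤ n) :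
    twoLocal n 1 (1,1) * twoLocal n 0 (1,3) = (-Complex.I) • pauliString (uStr n) := by
  have h := pauliString_mul_eq
    (fun t : Fin n => if (t:ℕ) = 1 then (1 : Fin 4) else if (t:ℕ) = 1+1 then 1 else 0)
    (fun t : Fin n => if (t:ℕ) = 0 then (1 : Fin 4) else if (t:ℕ) = 0+1 then 3 else 0)
    (uStr n)
    (fun j : Fin n => pEps (if (j:ℕ) = 1 then (1:Fin 4) else if (j:ℕ) = 1+1 then 1 else 0)
                  (if (j:ℕ) = 0 then (1:Fin 4) else if (j:ℕ) = 0+1 then 3 else 0))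
    (by
      intro j
      rw [pauli_mul]
      beta_reduce
      simp only [uStr]
      split_ifs <;>
        first
          | omega
          | exact congrArg (fun z => pEps _ _ • pauli z) (by decide))
  have hprod : (∏ j : Fin n, pEps (if (j:ℕ) = 1 then (1:Fin 4) else if (j:ℕ) = 1+1 then 1 else 0)
      (if (j:ℕ) = 0 then (1:Fin 4) else if (j:ℕ) = 0+1 then 3 else 0)) = -Complex.I := by
    rw [Finset.prod_eq_single (⟨1, by omega⟩ : Fin n)]
    · have hv : ((⟨1, by omega⟩ : Fin n) : ℕ) = 1 := rfl
      rw [hv]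
      norm_num [pEps, vecHead, vecTail]
      rfl
    · intro j _ hj
      have hjv : (j:ℕ) ≠ 1 := fun hh => hj (Fin.ext hh)
      split_ifs <;> first | omega | norm_num [pEps, vecHead, vecTail]
    · simp
  rw [← hprod]
  exact h

lemma special_partner {k n : ℕ} (hk : k = 8 ∨ k = 15) (hn : 3 ≤ n) :
    ∃ a ∈ dla k n, a * a = -1 ∧
      a * (Complex.I • twoLocal n 0 (1,1)) = -((Complex.I • twoLocal n 0 (1,1)) * a) := by
  refine ⟨(-Complex.I) • pauliString (uStr n), ?_, ?_, ?_⟩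
  · have h13 : ((1:Fin 4),(3:Fin 4)) ∈ spinGens k := by rcases hk with rfl|rfl <;> decide
    have h11 : ((1:Fin 4),(1:Fin 4)) ∈ spinGens k := by rcases hk with rfl|rfl <;> decide
    have hg1 := mem_dla_gen (k:=k) (n:=n) 1 3 h13 0 (by omega : 0+1 < n)
    have hg2 := mem_dla_gen (k:=k) (n:=n) 1 1 h11 1 (by omega : 1+1 < n)
    have hb := (dla k n).lie_mem hg1 hg2
    have heq : (1/2 : ℝ) • ⁅Complex.I • twoLocal n 0 (1,3), Complex.I • twoLocal n 1 (1,1)⁆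
        = (-Complex.I) • pauliString (uStr n) := by
      rw [Ring.lie_def, Matrix.smul_mul, Matrix.mul_smul, Matrix.smul_mul, Matrix.mul_smul,
        smul_smul, smul_smul, special_AB hn, special_BA hn, smul_smul, smul_smul, ← sub_smul]
      rw [show Complex.I * Complex.I * Complex.I - Complex.I * Complex.I * -Complex.I
          = -(2 * Complex.I) by linear_combination (2*Complex.I) * Complex.I_mul_I]
      rw [← smul_assoc, Complex.real_smul]
      norm_num
      rw [show (1/2 * (2 * Complex.I)) = Complex.I by ring]
    exact heq ▸ Submodule.smul_mem (dla k n).toSubmodule _ hb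
  · exact smul_sq _ _ (by rw [neg_mul_neg, Complex.I_mul_I]) (pauliString_sq _)
  · have hPu : pauliString (uStr n) * twoLocal n 0 (1,1) =
        -(twoLocal n 0 (1,1) * pauliString (uStr n)) := by
      apply pauliString_anticomm _ _ (⟨1, by omega⟩ : Fin n)
      · intro j hj
        have hjv : (j:ℕ) ≠ 1 := fun hh => hj (Fin.ext hh)
        beta_reduce
        simp only [uStr]
        constructor <;>
          · split_ifs <;> first | omega | norm_num [pEps, vecHead, vecTail]
      · have hv : ((⟨1, by omega⟩ : Fin n) : ℕ) = 1 := rfl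
        beta_reduce
        simp only [uStr, hv]
        norm_num [pEps, vecHead, vecTail]
        rfl
    exact smul_anticomm _ _ _ _ hPu

lemma gen_partner {k n : ℕ} (hk1 : 1 ≤ k) (hk2 : k ≤ 22) (hn : 3 ≤ n) (p q : Fin 4)
    (hpq : (p,q) ∈ spinGens k) (j : ℕ) (hj : j + 1 < n) :
    ∃ a ∈ dla k n, a * a = -1 ∧
      a * (Complex.I • twoLocal n j (p,q)) = -((Complex.I • twoLocal n j (p,q)) * a) := by
  cases j with
  | zero =>
    rcases exists_right_partner k hk1 hk2 p q hpq with ⟨hk, hp, hq⟩ | ⟨⟨p',q'⟩, hr, hne, hp', hq0⟩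
    · subst hp; subst hq; exact special_partner hk hn
    · refine ⟨Complex.I • twoLocal n 1 (p',q'), mem_dla_gen p' q' hr 1 (by omega),
        smul_sq _ _ Complex.I_mul_I (twoLocal_sq _ _), ?_⟩
      have h := twoLocal_adj_anticomm 0 (by omega : 0 + 1 < n) p q p' q' hq0 hp'
        (fun hh => hne hh.symm)
      have h' : twoLocal n 1 (p',q') * twoLocal n 0 (p,q)
          = -(twoLocal n 0 (p,q) * twoLocal n 1 (p',q')) := by rw [h, neg_neg]
      exact smul_anticomm _ _ _ _ h'
  | succ j' =>
    rcases exists_left_partner k hk1 hk2 p q hpq with ⟨⟨p',q'⟩, hr, hne, hq0', hp0⟩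
    refine ⟨Complex.I • twoLocal n j' (p',q'), mem_dla_gen p' q' hr j' (by omega),
      smul_sq _ _ Complex.I_mul_I (twoLocal_sq _ _), ?_⟩
    exact smul_anticomm _ _ _ _ (twoLocal_adj_anticomm j' (by omega) p' q' p q hq0' hp0 hne)

lemma gen_trace_zero {k n : ℕ} (hk1 : 1 ≤ k) (hk2 : k ≤ 22) (hn : 3 ≤ n)
    (c : Matrix (Fin n → Fin 2) (Fin n → Fin 2) ℂ)
    (hcen : ∀ x ∈ dla k n, ⁅c, x⁆ = 0) (p q : Fin 4) (hpq : (p,q) ∈ spinGens k)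
    (j : ℕ) (hj : j + 1 < n) :
    (c * (Complex.I • twoLocal n j (p,q))).trace = 0 := by
  obtain ⟨a, ha, ha2, hax⟩ := gen_partner hk1 hk2 hn p q hpq j hj
  have h1 : c * a = a * c := by
    have h := hcen a ha
    rw [Ring.lie_def] at h
    exact sub_eq_zero.mp h
  exact key_trace c _ a h1 ha2 hax

/-- The dynamical Lie algebras `a_k(n)` have trivial center for `1 ≤ k ≤ 22`, `n ≥ 3`. -/
theorem dla_trivial_center (k n : ℕ) (hk1 : 1 ≤ k) (hk2 : k ≤ 22) (hn : 3 ≤ n) :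
    ∀ c ∈ dla k n, (∀ x ∈ dla k n, ⁅c, x⁆ = 0) → c = 0 := by
  intro c hc hcen
  have hcomm : ∀ x ∈ dla k n, c * x = x * c := fun x hx =>
    sub_eq_zero.mp (by rw [← Ring.lie_def]; exact hcen x hx)
  have hskew : cᴴ = -c := by
    have hle : dla k n ≤ skewLie := by
      rw [dla, LieSubalgebra.lieSpan_le]
      rintro x ⟨⟨p,q⟩, hpq, j, hj, rfl⟩
      show (Complex.I • twoLocal n j (p,q))ᴴ = -(Complex.I • twoLocal n j (p,q))
      rw [Matrix.conjTranspose_smul, twoLocal_herm, Complex.star_def, Complex.conj_I, neg_smul]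
    exact hle hc
  have htr : (c * c).trace = 0 := by
    apply central_self_trace
      {x | ∃ pq ∈ spinGens k, ∃ j, j + 1 < n ∧ x = Complex.I • twoLocal n j pq} c hc hcomm
    rintro x ⟨⟨p,q⟩, hpq, j, hj, rfl⟩
    exact gen_trace_zero hk1 hk2 hn c hcen p q hpq j hj
  exact eq_zero_of_skew_trace c hskew htr
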